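/- Let Z be a random variable (continuous or discrete) and Y a random variable with finite outcome set 𝒴. Let p_{ZY} and p̃_{ZY} be two joint distributions of (Z,Y) that have the same marginal over Z, p(z) = p̃(z), and satisfy |p_{ZY} − p̃_{ZY}|₁ ≤ ε ≤ 1/2. Then |I_p(Z;Y) − I_p̃(Z;Y)| ≤ −2ε·log(ε/|𝒴|²). -/

import Mathlib

noncomputable section

/-- `p` is a joint probability distribution on the finite product `A × B`. -/
def IsJoint {A B : Type*} [Fintype A] [Fintype B] (p : A → B → ℝ) : Prop :=
  (∀ a b, 0 ≤ p a b) ∧ (∑ a, ∑ b, p a b) = 1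

/-- `κ` is a channel (conditional distribution) from `A` to the finite type `B`. -/
def IsChannel {A B : Type*} [Fintype B] (κ : A → B → ℝ) : Prop :=
  ∀ a, (∀ b, 0 ≤ κ a b) ∧ (∑ b, κ a b) = 1

/-- Marginal distribution of the first coordinate. -/
def margFst {A B : Type*} [Fintype B] (p : A → B → ℝ) : A → ℝ := fun a => ∑ b, p a b

/-- Marginal distribution of the second coordinate. -/
def margSnd {A B : Type*} [Fintype A] (p : A → B → ℝ) : B → ℝ := fun b => ∑ a, p a b

/-- ℓ1 distance between two joint distributions. -/
def l1 {A B : Type*} [Fintype A] [Fintype B] (p q : A → B → ℝ) : ℝ :=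
  ∑ a, ∑ b, |p a b - q a b|

/-- Shannon entropy of a distribution on a finite type. -/
def ent {A : Type*} [Fintype A] (q : A → ℝ) : ℝ := -∑ a, q a * Real.log (q a)

/-- Conditional entropy `H(B | A)` of the second coordinate given the first. -/
def condEnt {A B : Type*} [Fintype A] [Fintype B] (p : A → B → ℝ) : ℝ :=
  -∑ a, ∑ b, p a b * Real.log (p a b / margFst p a)

/-- Mutual information `I(A;B)` of a joint distribution, as `H(B) - H(B|A)`. -/
def mi {A B : Type*} [Fintype A] [Fintype B] (p : A → B → ℝ) : ℝ :=
  ent (margSnd p) - condEnt p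

open Real Finset

/-- slope bound: `(x+t) log (x+t) - x log x ≤ t` when `x+t ≤ 1`. -/
private lemma aux_slope {x t : ℝ} (hx : 0 ≤ x) (ht : 0 ≤ t) (hxt : x + t ≤ 1) :
    (x + t) * Real.log (x + t) - x * Real.log x ≤ t := by
  rcases eq_or_lt_of_le ht with h | h
  · simp [← h]
  rcases eq_or_lt_of_le hx with h0 | h0
  · have h1 : (x + t) * Real.log (x + t) ≤ 0 :=
      Real.mul_log_nonpos (by linarith) hxt
    have : x * Real.log x = 0 := by rw [← h0]; simp
    linarith
  · have hxtpos : 0 < x + t := by linarith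
    have hlog : Real.log (x + t) - Real.log x ≤ t / x := by
      rw [← Real.log_div (ne_of_gt hxtpos) (ne_of_gt h0)]
      have h2 := Real.log_le_sub_one_of_pos (show 0 < (x + t) / x by positivity)
      have h3 : (x + t) / x - 1 = t / x := by field_simp; ring
      linarith
    have h4 : Real.log (x + t) ≤ 0 := Real.log_nonpos (by linarith) hxt
    have h5 : x * (Real.log (x + t) - Real.log x) ≤ x * (t / x) :=
      mul_le_mul_of_nonneg_left hlog hx
    have h6 : x * (t / x) = t := by field_simp
    have h7 : t * Real.log (x + t) ≤ 0 := mul_nonpos_of_nonneg_of_nonpos h.le h4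
    nlinarith

/-- `-x log x ≤ 1/e`. -/
private lemma aux_eta_le_inv_e {x : ℝ} (hx : 0 ≤ x) :
    -(x * Real.log x) ≤ (Real.exp 1)⁻¹ := by
  rcases eq_or_lt_of_le hx with h0 | h0
  · rw [← h0]; simp; positivity
  · have he : (0:ℝ) < Real.exp 1 := Real.exp_pos 1
    have h1 : Real.log ((Real.exp 1 * x)⁻¹) ≤ (Real.exp 1 * x)⁻¹ - 1 :=
      Real.log_le_sub_one_of_pos (by positivity)
    have h2 : Real.log ((Real.exp 1 * x)⁻¹) = -1 - Real.log x := by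
      rw [Real.log_inv, Real.log_mul (ne_of_gt he) (ne_of_gt h0), Real.log_exp]; ring
    have h3 : -Real.log x ≤ (Real.exp 1 * x)⁻¹ := by linarith
    have h4 : x * -Real.log x ≤ x * (Real.exp 1 * x)⁻¹ :=
      mul_le_mul_of_nonneg_left h3 hx
    have h5 : x * (Real.exp 1 * x)⁻¹ = (Real.exp 1)⁻¹ := by
      field_simp
    nlinarith

/-- lower bound: `x log x - (x+t) log (x+t) ≤ -(t log t)`. -/
private lemma aux_lower {x t : ℝ} (hx : 0 ≤ x) (ht : 0 ≤ t) (hxt : x + t ≤ 1) :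
    x * Real.log x - (x + t) * Real.log (x + t) ≤ -(t * Real.log t) := by
  have h1 : x * Real.log x ≤ x * Real.log (x + t) := by
    rcases eq_or_lt_of_le hx with h0 | h0
    · rw [← h0]; simp
    · exact mul_le_mul_of_nonneg_left (Real.log_le_log h0 (by linarith)) hx
  have h2 : t * Real.log t ≤ t * Real.log (x + t) := by
    rcases eq_or_lt_of_le ht with h0 | h0
    · rw [← h0]; simp
    · exact mul_le_mul_of_nonneg_left (Real.log_le_log h0 (by linarith)) ht
  nlinarith [add_mul x t (Real.log (x + t))]

/-- upper bound: `(x+t) log (x+t) - x log x ≤ -(t log t) + t log 2`. -/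
private lemma aux_upper {x t : ℝ} (hx : 0 ≤ x) (ht : 0 ≤ t) (hxt : x + t ≤ 1) :
    (x + t) * Real.log (x + t) - x * Real.log x ≤ -(t * Real.log t) + t * Real.log 2 := by
  have hl2 : (0.6931471803 : ℝ) < Real.log 2 := Real.log_two_gt_d9
  rcases le_or_gt t (2 / Real.exp 1) with hc | hc
  · have h1 := aux_slope hx ht hxt
    have h2 : t * (1 + Real.log t - Real.log 2) ≤ 0 := by
      rcases eq_or_lt_of_le ht with h0 | h0
      · rw [← h0]; simp
      · have he : (0:ℝ) < Real.exp 1 := Real.exp_pos 1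
        have h3 : Real.log t ≤ Real.log (2 / Real.exp 1) :=
          Real.log_le_log h0 hc
        have h4 : Real.log (2 / Real.exp 1) = Real.log 2 - 1 := by
          rw [Real.log_div (by norm_num) (ne_of_gt he), Real.log_exp]
        apply mul_nonpos_of_nonneg_of_nonpos h0.le
        linarith
      -- t ≤ -(t log t) + t log 2
    nlinarith
  · have he : (0:ℝ) < Real.exp 1 := Real.exp_pos 1
    have hee : Real.exp 1 < 2.7182818286 := by
      have := Real.exp_one_lt_d9; linarith
    have h1 : (x + t) * Real.log (x + t) ≤ 0 := Real.mul_log_nonpos (by linarith) hxt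
    have h2 : -(x * Real.log x) ≤ (Real.exp 1)⁻¹ := aux_eta_le_inv_e hx
    have h3 : 0 ≤ -(t * Real.log t) := by
      have := Real.mul_log_nonpos ht (by linarith); linarith
    -- (exp 1)⁻¹ ≤ t * log 2 since t > 2/exp 1 and 2 log 2 > 1
    have h4 : (Real.exp 1)⁻¹ ≤ t * Real.log 2 := by
      have h5 : 2 / Real.exp 1 * Real.log 2 ≤ t * Real.log 2 :=
        mul_le_mul_of_nonneg_right hc.le (by linarith)
      have h6 : (Real.exp 1)⁻¹ ≤ 2 / Real.exp 1 * Real.log 2 := by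
        rw [div_mul_eq_mul_div, inv_eq_one_div]
        exact (div_le_div_iff_of_pos_right he).mpr (by linarith)
      linarith
    linarith

/-- pointwise bound on difference of `x log x`. -/
private lemma aux_pointwise {a b : ℝ} (ha0 : 0 ≤ a) (ha1 : a ≤ 1) (hb0 : 0 ≤ b) (hb1 : b ≤ 1) :
    |a * Real.log a - b * Real.log b| ≤ -(|a - b| * Real.log |a - b|) + |a - b| * Real.log 2 := by
  have hl2 : (0.6931471803 : ℝ) < Real.log 2 := Real.log_two_gt_d9
  rcases le_total a b with h | h
  · have hab : |a - b| = b - a := by rw [abs_sub_comm]; exact abs_of_nonneg (by linarith)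
    have hb' : b = a + (b - a) := by ring
    rw [hab, abs_le]
    constructor
    · have := aux_upper ha0 (by linarith : (0:ℝ) ≤ b - a) (by linarith)
      rw [← hb'] at this; linarith
    · have := aux_lower ha0 (by linarith : (0:ℝ) ≤ b - a) (by linarith)
      rw [← hb'] at this
      have hge : 0 ≤ (b - a) * Real.log 2 := by
        apply mul_nonneg (by linarith); linarith
      linarith
  · have hab : |a - b| = a - b := abs_of_nonneg (by linarith)
    have ha' : a = b + (a - b) := by ring
    rw [hab, abs_le]
    constructor
    · have := aux_lower hb0 (by linarith : (0:ℝ) ≤ a - b) (by linarith)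
      rw [← ha'] at this
      have hge : 0 ≤ (a - b) * Real.log 2 := by
        apply mul_nonneg (by linarith); linarith
      linarith
    · have := aux_upper hb0 (by linarith : (0:ℝ) ≤ a - b) (by linarith)
      rw [← ha'] at this; linarith

/-- monotonicity transfer: `-(s log s) + c s ≤ -(e log e) + c e` for `s ≤ e ≤ 1`, `c ≥ 1`. -/
private lemma aux_mono {s e c : ℝ} (hs : 0 ≤ s) (hse : s ≤ e) (he : e ≤ 1) (hc : 1 ≤ c) :
    -(s * Real.log s) + c * s ≤ -(e * Real.log e) + c * e := by
  have h1 : e * Real.log e - s * Real.log s ≤ e - s := by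
    have := aux_slope hs (by linarith : (0:ℝ) ≤ e - s) (by linarith)
    have he' : s + (e - s) = e := by ring
    rw [he'] at this; linarith
  nlinarith

/-- log-sum inequality. -/
private lemma aux_logsum {ι : Type*} [Fintype ι] (a b : ι → ℝ)
    (ha : ∀ i, 0 ≤ a i) (hb : ∀ i, 0 ≤ b i) (hab : ∀ i, b i = 0 → a i = 0)
    (hB : 0 < ∑ i, b i) :
    (∑ i, a i) * Real.log ((∑ i, a i) / (∑ i, b i)) ≤ ∑ i, a i * Real.log (a i / b i) := by
  set A := ∑ i, a i with hA
  set B := ∑ i, b i with hBdef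
  have hBne : B ≠ 0 := ne_of_gt hB
  have jensen := Real.convexOn_mul_log.map_sum_le (t := Finset.univ)
    (w := fun i => b i / B) (p := fun i => a i / b i)
    (fun i _ => div_nonneg (hb i) hB.le)
    (by rw [← Finset.sum_div]; exact div_self hBne)
    (fun i _ => Set.mem_Ici.mpr (div_nonneg (ha i) (hb i)))
  have key1 : ∀ i, (b i / B) • (a i / b i) = a i / B := by
    intro i
    rcases eq_or_ne (b i) 0 with h | h
    · simp [h, hab i h]
    · rw [smul_eq_mul]; field_simp
  have hsum1 : ∑ i, (b i / B) • (a i / b i) = A / B := by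
    rw [Finset.sum_congr rfl (fun i _ => key1 i), ← Finset.sum_div]
  rw [hsum1] at jensen
  have key2 : ∀ i, B * ((b i / B) • ((a i / b i) * Real.log (a i / b i)))
      = a i * Real.log (a i / b i) := by
    intro i
    rcases eq_or_ne (b i) 0 with h | h
    · simp [h, hab i h]
    · rw [smul_eq_mul]; field_simp
  calc A * Real.log (A / B) = B * ((A / B) * Real.log (A / B)) := by field_simp
    _ ≤ B * ∑ i, (b i / B) • ((a i / b i) * Real.log (a i / b i)) :=
        mul_le_mul_of_nonneg_left jensen hB.le
    _ = ∑ i, a i * Real.log (a i / b i) := by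
        rw [Finset.mul_sum]; exact Finset.sum_congr rfl fun i _ => key2 i

/-- Gibbs bound: `∑ -(t log t) ≤ -(S log (S/n))`. -/
private lemma aux_gibbs {ι : Type*} [Fintype ι] (t : ι → ℝ) (h : ∀ i, 0 ≤ t i)
    (hcard : 0 < Fintype.card ι) :
    ∑ i, -(t i * Real.log (t i))
      ≤ -((∑ i, t i) * Real.log ((∑ i, t i) / (Fintype.card ι : ℝ))) := by
  have hB : (0:ℝ) < ∑ _i : ι, (1:ℝ) := by
    rw [Finset.sum_const, Finset.card_univ, nsmul_eq_mul, mul_one]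
    exact_mod_cast hcard
  have := aux_logsum t (fun _ => (1:ℝ)) h (fun _ => zero_le_one) (fun i h1 => absurd h1 one_ne_zero) hB
  simp only [div_one] at this
  rw [Finset.sum_const, Finset.card_univ, nsmul_eq_mul, mul_one] at this
  rw [Finset.sum_neg_distrib]
  linarith

/-- aggregate bound for an entropy-difference side. -/
private lemma aux_side {ι : Type*} [Fintype ι] (u : ι → ℝ) (ε : ℝ) (hu : ∀ i, 0 ≤ u i)
    (hm : 2 ≤ Fintype.card ι) (hsum : ∑ i, u i ≤ ε) (hε2 : ε ≤ 1/2) (hε0 : 0 < ε) :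
    ∑ i, (-(u i * Real.log (u i)) + u i * Real.log 2)
      ≤ -(ε * Real.log ε) + 2 * ε * Real.log (Fintype.card ι : ℝ) := by
  set σ := ∑ i, u i with hσdef
  set m := (Fintype.card ι : ℝ) with hmdef
  have hm2 : (2:ℝ) ≤ m := by rw [hmdef]; exact_mod_cast hm
  have hm' : (2:ℝ) ≤ m := hm2
  have hmpos : (0:ℝ) < m := by linarith
  have hlogm : Real.log 2 ≤ Real.log m := Real.log_le_log two_pos hm'
  have hl2 : (0.6931471803 : ℝ) < Real.log 2 := Real.log_two_gt_d9
  have hlogm1 : 1 ≤ 2 * Real.log m := by linarith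
  have hσ0 : 0 ≤ σ := Finset.sum_nonneg fun i _ => hu i
  have hsplit : ∑ i, (-(u i * Real.log (u i)) + u i * Real.log 2)
      = (∑ i, -(u i * Real.log (u i))) + σ * Real.log 2 := by
    rw [Finset.sum_add_distrib, ← Finset.sum_mul]
  have hgibbs := aux_gibbs u hu (by omega)
  rcases eq_or_lt_of_le hσ0 with h0 | h0
  · have hz : ∀ i ∈ Finset.univ, u i = 0 :=
      (Finset.sum_eq_zero_iff_of_nonneg (fun i _ => hu i)).mp h0.symm
    have hLHS : ∑ i, (-(u i * Real.log (u i)) + u i * Real.log 2) = 0 :=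
      Finset.sum_eq_zero fun i hi => by rw [hz i hi]; simp
    rw [hLHS]
    have h1 : Real.log ε ≤ 0 := Real.log_nonpos hε0.le (by linarith)
    nlinarith
  · have hlogdiv : Real.log (σ / m) = Real.log σ - Real.log m :=
      Real.log_div (ne_of_gt h0) (ne_of_gt hmpos)
    have h1 : ∑ i, (-(u i * Real.log (u i)) + u i * Real.log 2)
        ≤ -(σ * Real.log σ) + 2 * Real.log m * σ := by
      rw [hsplit]
      have h2 : -(σ * Real.log (σ / m)) = -(σ * Real.log σ) + σ * Real.log m := by
        rw [hlogdiv]; ring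
      nlinarith [hgibbs]
    have h3 := aux_mono hσ0 hsum (by linarith : ε ≤ 1) hlogm1
    calc ∑ i, (-(u i * Real.log (u i)) + u i * Real.log 2)
        ≤ -(σ * Real.log σ) + 2 * Real.log m * σ := h1
      _ ≤ -(ε * Real.log ε) + 2 * Real.log m * ε := h3
      _ = -(ε * Real.log ε) + 2 * ε * Real.log m := by ring

/-- conditional-entropy side bound. -/
private lemma aux_cond {Z Y : Type*} [Fintype Z] [Fintype Y]
    (p q : Z → Y → ℝ) (w : Z → ℝ) (ε : ℝ)
    (hp : ∀ z y, 0 ≤ p z y) (hq : ∀ z y, 0 ≤ q z y)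
    (hpw : ∀ z y, p z y ≤ w z) (hqw : ∀ z y, q z y ≤ w z)
    (hw : ∀ z, 0 ≤ w z) (hWsum : ∑ z, w z = 1)
    (hm : 2 ≤ Fintype.card Y)
    (hδ : ∑ z, ∑ y, |p z y - q z y| ≤ ε) (hε1 : ε ≤ 1/2) (hε0 : 0 < ε) :
    |(∑ z, ∑ y, w z * ((p z y / w z) * Real.log (p z y / w z)))
      - ∑ z, ∑ y, w z * ((q z y / w z) * Real.log (q z y / w z))|
      ≤ -(ε * Real.log ε) + 2 * ε * Real.log (Fintype.card Y : ℝ) := by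
  have hm2 : (2:ℝ) ≤ (Fintype.card Y : ℝ) := by exact_mod_cast hm
  have hmpos : (0:ℝ) < (Fintype.card Y : ℝ) := by linarith
  have hl2 : (0.6931471803 : ℝ) < Real.log 2 := Real.log_two_gt_d9
  have hlogm : Real.log 2 ≤ Real.log (Fintype.card Y : ℝ) := Real.log_le_log two_pos hm2
  have hlogm1 : 1 ≤ 2 * Real.log (Fintype.card Y : ℝ) := by linarith
  have hwz0 : ∀ z, w z = 0 → ∀ y, p z y = 0 ∧ q z y = 0 := by
    intro z h y
    exact ⟨le_antisymm (h ▸ hpw z y) (hp z y), le_antisymm (h ▸ hqw z y) (hq z y)⟩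
  have ha01 : ∀ z y, 0 ≤ p z y / w z ∧ p z y / w z ≤ 1 := by
    intro z y
    rcases eq_or_ne (w z) 0 with h | h
    · rw [h]; simp
    · have hw0 : 0 < w z := lt_of_le_of_ne (hw z) (Ne.symm h)
      exact ⟨div_nonneg (hp z y) (hw z), (div_le_one hw0).mpr (hpw z y)⟩
  have hb01 : ∀ z y, 0 ≤ q z y / w z ∧ q z y / w z ≤ 1 := by
    intro z y
    rcases eq_or_ne (w z) 0 with h | h
    · rw [h]; simp
    · have hw0 : 0 < w z := lt_of_le_of_ne (hw z) (Ne.symm h)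
      exact ⟨div_nonneg (hq z y) (hw z), (div_le_one hw0).mpr (hqw z y)⟩
  have hwτ : ∀ z y, w z * |p z y / w z - q z y / w z| = |p z y - q z y| := by
    intro z y
    rcases eq_or_ne (w z) 0 with h | h
    · rw [h, zero_mul, (hwz0 z h y).1, (hwz0 z h y).2]; simp
    · have hw0 : 0 < w z := lt_of_le_of_ne (hw z) (Ne.symm h)
      rw [div_sub_div_same, abs_div, abs_of_pos hw0, mul_comm,
        div_mul_cancel₀ _ h]
  set d : Z → ℝ := fun z => ∑ y, |p z y - q z y| with hddef
  set U : Z → ℝ := fun z => ∑ y, |p z y / w z - q z y / w z| with hUdef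
  have hd0 : ∀ z, 0 ≤ d z := fun z => Finset.sum_nonneg fun y _ => abs_nonneg _
  have hU0 : ∀ z, 0 ≤ U z := fun z => Finset.sum_nonneg fun y _ => abs_nonneg _
  have hdW : ∀ z, w z * U z = d z := by
    intro z
    simp only [hUdef, hddef]
    rw [Finset.mul_sum]
    exact Finset.sum_congr rfl fun y _ => hwτ z y
  have hWd0 : ∀ z, w z = 0 → d z = 0 := by
    intro z h
    rw [← hdW z, h, zero_mul]
  have hδd : ∑ z, d z ≤ ε := by simp only [hddef]; exact hδ
  have hδ0 : 0 ≤ ∑ z, d z := Finset.sum_nonneg fun z _ => hd0 z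
  have step1 : |(∑ z, ∑ y, w z * ((p z y / w z) * Real.log (p z y / w z)))
      - ∑ z, ∑ y, w z * ((q z y / w z) * Real.log (q z y / w z))|
      ≤ ∑ z, ∑ y, w z * (-(|p z y / w z - q z y / w z|
            * Real.log |p z y / w z - q z y / w z|)
          + |p z y / w z - q z y / w z| * Real.log 2) := by
    rw [← Finset.sum_sub_distrib]
    refine le_trans (Finset.abs_sum_le_sum_abs _ _) (Finset.sum_le_sum fun z _ => ?_)
    rw [← Finset.sum_sub_distrib]
    refine le_trans (Finset.abs_sum_le_sum_abs _ _) (Finset.sum_le_sum fun y _ => ?_)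
    rw [← mul_sub, abs_mul, abs_of_nonneg (hw z)]
    exact mul_le_mul_of_nonneg_left
      (aux_pointwise (ha01 z y).1 (ha01 z y).2 (hb01 z y).1 (hb01 z y).2) (hw z)
  have e1 : ∀ z, ∑ y, w z * (-(|p z y / w z - q z y / w z|
            * Real.log |p z y / w z - q z y / w z|)
          + |p z y / w z - q z y / w z| * Real.log 2)
      = w z * (∑ y, -(|p z y / w z - q z y / w z|
            * Real.log |p z y / w z - q z y / w z|)) + d z * Real.log 2 := by
    intro z
    have hterm : ∀ y, w z * (-(|p z y / w z - q z y / w z|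
            * Real.log |p z y / w z - q z y / w z|)
          + |p z y / w z - q z y / w z| * Real.log 2)
        = w z * -(|p z y / w z - q z y / w z|
            * Real.log |p z y / w z - q z y / w z|)
          + (w z * |p z y / w z - q z y / w z|) * Real.log 2 := fun y => by ring
    have e2 : ∑ y, w z * |p z y / w z - q z y / w z| = d z := by
      simp only [hddef]
      exact Finset.sum_congr rfl fun y _ => hwτ z y
    rw [Finset.sum_congr rfl fun y _ => hterm y, Finset.sum_add_distrib,
      ← Finset.mul_sum, ← Finset.sum_mul, e2]
  have e3 : ∀ z, (∑ y, -(|p z y / w z - q z y / w z|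
           * Real.log |p z y / w z - q z y / w z|))
      ≤ -(U z * Real.log (U z / (Fintype.card Y : ℝ))) := by
    intro z
    have := aux_gibbs (fun y => |p z y / w z - q z y / w z|)
      (fun y => abs_nonneg _) (by omega)
    simp only [hUdef]
    exact this
  have e4 : ∀ z, w z * (-(U z * Real.log (U z / (Fintype.card Y : ℝ))))
      = -(d z * Real.log (d z / w z)) + d z * Real.log (Fintype.card Y : ℝ) := by
    intro z
    rcases eq_or_ne (w z) 0 with h | h
    · rw [h, zero_mul, hWd0 z h]; simp
    · have hU : U z = d z / w z := by rw [← hdW z, mul_div_cancel_left₀ _ h]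
      rcases eq_or_ne (d z) 0 with hd | hd
      · rw [hU, hd, zero_div]; simp
      · rw [hU, Real.log_div (div_ne_zero hd h) (ne_of_gt hmpos)]
        field_simp
        ring
  have step3 : ∑ z, -(d z * Real.log (d z / w z))
      ≤ -((∑ z, d z) * Real.log (∑ z, d z)) := by
    have h1 := aux_logsum d w hd0 hw hWd0 (by rw [hWsum]; norm_num)
    rw [hWsum, div_one] at h1
    rw [Finset.sum_neg_distrib]
    linarith
  calc |(∑ z, ∑ y, w z * ((p z y / w z) * Real.log (p z y / w z)))
      - ∑ z, ∑ y, w z * ((q z y / w z) * Real.log (q z y / w z))|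
      ≤ ∑ z, ∑ y, w z * (-(|p z y / w z - q z y / w z|
            * Real.log |p z y / w z - q z y / w z|)
          + |p z y / w z - q z y / w z| * Real.log 2) := step1
    _ ≤ ∑ z, (-(d z * Real.log (d z / w z))
          + d z * Real.log (Fintype.card Y : ℝ) + d z * Real.log 2) := by
        refine Finset.sum_le_sum fun z _ => ?_
        rw [e1 z]
        have h2 := mul_le_mul_of_nonneg_left (e3 z) (hw z)
        rw [e4 z] at h2
        linarith
    _ = (∑ z, -(d z * Real.log (d z / w z)))
          + (∑ z, d z) * Real.log (Fintype.card Y : ℝ)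
          + (∑ z, d z) * Real.log 2 := by
        rw [Finset.sum_add_distrib, Finset.sum_add_distrib,
          Finset.sum_mul, Finset.sum_mul]
    _ ≤ -((∑ z, d z) * Real.log (∑ z, d z))
          + 2 * Real.log (Fintype.card Y : ℝ) * (∑ z, d z) := by
        nlinarith [step3, hδ0, hlogm]
    _ ≤ -(ε * Real.log ε) + 2 * Real.log (Fintype.card Y : ℝ) * ε :=
        aux_mono hδ0 hδd (by linarith) hlogm1
    _ = -(ε * Real.log ε) + 2 * ε * Real.log (Fintype.card Y : ℝ) := by ring

/-- If two joint distributions of `(Z,Y)` (with `Y` finite) share the same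
marginal over `Z` and are within ℓ1 distance `ε ≤ 1/2`, then their mutual informations
`I(Z;Y)` differ by at most `-2ε log (ε / |𝒴|²)`. -/
theorem mutual_information_l1_bound {Z Y : Type*} [Fintype Z] [Fintype Y]
    (p ptilde : Z → Y → ℝ) (ε : ℝ)
    (hp : IsJoint p) (hptilde : IsJoint ptilde)
    (hmarg : ∀ z, margFst p z = margFst ptilde z)
    (hl1 : l1 p ptilde ≤ ε) (hε : ε ≤ 1/2) :
    |mi p - mi ptilde| ≤ -(2*ε) * Real.log (ε / (Fintype.card Y : ℝ)^2) := by

  classical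
  have hδnn : 0 ≤ l1 p ptilde :=
    Finset.sum_nonneg fun z _ => Finset.sum_nonneg fun y _ => abs_nonneg _
  have hεnn : 0 ≤ ε := le_trans hδnn hl1
  rcases eq_or_lt_of_le hεnn with hε0 | hε0
  · -- ε = 0 : the two joints coincide
    have h1 : l1 p ptilde = 0 := le_antisymm (hε0 ▸ hl1) hδnn
    have h2 := (Finset.sum_eq_zero_iff_of_nonneg
      (fun z _ => Finset.sum_nonneg fun y _ => abs_nonneg (p z y - ptilde z y))).mp h1
    have hpq : p = ptilde := by
      funext z y
      have h3 := (Finset.sum_eq_zero_iff_of_nonneg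
        (fun y _ => abs_nonneg (p z y - ptilde z y))).mp (h2 z (Finset.mem_univ z))
      have := h3 y (Finset.mem_univ y)
      rwa [abs_eq_zero, sub_eq_zero] at this
    rw [hpq, sub_self, abs_zero, ← hε0]
    simp
  -- ε > 0 from here on
  have hYne : Nonempty Y := by
    rcases isEmpty_or_nonempty Y with h | h
    · exfalso
      have h2 := hp.2
      simp [Finset.univ_eq_empty] at h2
    · exact h
  have hcard1 : 1 ≤ Fintype.card Y := Fintype.card_pos
  rcases eq_or_lt_of_le hcard1 with hc1 | hc2
  · -- |Y| = 1 : both mutual informations vanish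
    obtain ⟨y0, hy0⟩ := Fintype.card_eq_one_iff.mp hc1.symm
    have huniv : (Finset.univ : Finset Y) = {y0} :=
      Finset.eq_singleton_iff_unique_mem.mpr ⟨Finset.mem_univ y0, fun y _ => hy0 y⟩
    have key : ∀ r : Z → Y → ℝ, IsJoint r → mi r = 0 := by
      intro r hr
      have hmargF : ∀ z, margFst r z = r z y0 := by
        intro z; unfold margFst; rw [huniv, Finset.sum_singleton]
      have hsum : ∑ z, r z y0 = 1 := by
        have h2 := hr.2
        calc ∑ z, r z y0 = ∑ z, ∑ y, r z y :=
              Finset.sum_congr rfl fun z _ => by rw [huniv, Finset.sum_singleton]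
          _ = 1 := h2
      have hent : ent (margSnd r) = 0 := by
        unfold ent margSnd
        rw [huniv, Finset.sum_singleton, hsum]
        simp
      have hcond : condEnt r = 0 := by
        unfold condEnt
        rw [neg_eq_zero]
        apply Finset.sum_eq_zero
        intro z _
        rw [huniv, Finset.sum_singleton, hmargF z]
        rcases eq_or_ne (r z y0) 0 with h | h
        · rw [h]; simp
        · rw [div_self h, Real.log_one, mul_zero]
      unfold mi
      rw [hent, hcond, sub_zero]
    rw [key p hp, key ptilde hptilde, sub_self, abs_zero]
    have hcast : (Fintype.card Y : ℝ) = 1 := by rw [← hc1]; norm_num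
    rw [hcast, one_pow, div_one]
    have hlog : Real.log ε ≤ 0 := Real.log_nonpos hε0.le (by linarith)
    nlinarith
  -- main case : 2 ≤ |Y|
  have hm : 2 ≤ Fintype.card Y := hc2
  have hm2 : (2:ℝ) ≤ (Fintype.card Y : ℝ) := by exact_mod_cast hm
  have hmpos : (0:ℝ) < (Fintype.card Y : ℝ) := by linarith
  have hw0 : ∀ z, 0 ≤ margFst p z := fun z => Finset.sum_nonneg fun y _ => hp.1 z y
  have hWsum : ∑ z, margFst p z = 1 := by simp only [margFst]; exact hp.2
  have hpw : ∀ z y, p z y ≤ margFst p z := fun z y =>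
    Finset.single_le_sum (fun y' _ => hp.1 z y') (Finset.mem_univ y)
  have hqw : ∀ z y, ptilde z y ≤ margFst p z := by
    intro z y
    rw [hmarg z]
    exact Finset.single_le_sum (fun y' _ => hptilde.1 z y') (Finset.mem_univ y)
  have hl1' : ∑ z, ∑ y, |p z y - ptilde z y| ≤ ε := hl1
  -- entropy (marginal) part
  have hPnn : ∀ y, 0 ≤ margSnd p y := fun y => Finset.sum_nonneg fun z _ => hp.1 z y
  have hQnn : ∀ y, 0 ≤ margSnd ptilde y := fun y => Finset.sum_nonneg fun z _ => hptilde.1 z y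
  have hPsum : ∑ y, margSnd p y = 1 := by
    simp only [margSnd]; rw [Finset.sum_comm]; exact hp.2
  have hQsum : ∑ y, margSnd ptilde y = 1 := by
    simp only [margSnd]; rw [Finset.sum_comm]; exact hptilde.2
  have hP1 : ∀ y, margSnd p y ≤ 1 := by
    intro y; rw [← hPsum]
    exact Finset.single_le_sum (fun y' _ => hPnn y') (Finset.mem_univ y)
  have hQ1 : ∀ y, margSnd ptilde y ≤ 1 := by
    intro y; rw [← hQsum]
    exact Finset.single_le_sum (fun y' _ => hQnn y') (Finset.mem_univ y)
  have hE1 : |ent (margSnd p) - ent (margSnd ptilde)|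
      ≤ ∑ y, (-(|margSnd p y - margSnd ptilde y|
            * Real.log |margSnd p y - margSnd ptilde y|)
          + |margSnd p y - margSnd ptilde y| * Real.log 2) := by
    have hrw : ent (margSnd p) - ent (margSnd ptilde)
        = ∑ y, (margSnd ptilde y * Real.log (margSnd ptilde y)
            - margSnd p y * Real.log (margSnd p y)) := by
      simp only [ent]
      rw [Finset.sum_sub_distrib]
      ring
    rw [hrw]
    refine le_trans (Finset.abs_sum_le_sum_abs _ _) (Finset.sum_le_sum fun y _ => ?_)
    have h := aux_pointwise (hQnn y) (hQ1 y) (hPnn y) (hP1 y)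
    rw [abs_sub_comm (margSnd ptilde y) (margSnd p y)] at h
    exact h
  have hsum1 : ∑ y, |margSnd p y - margSnd ptilde y| ≤ ε := by
    calc ∑ y, |margSnd p y - margSnd ptilde y|
        ≤ ∑ y, ∑ z, |p z y - ptilde z y| := by
          refine Finset.sum_le_sum fun y _ => ?_
          have hstep : margSnd p y - margSnd ptilde y = ∑ z, (p z y - ptilde z y) := by
            simp only [margSnd]; rw [Finset.sum_sub_distrib]
          rw [hstep]
          exact Finset.abs_sum_le_sum_abs _ _
      _ = ∑ z, ∑ y, |p z y - ptilde z y| := Finset.sum_comm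
      _ ≤ ε := hl1'
  have hE : |ent (margSnd p) - ent (margSnd ptilde)|
      ≤ -(ε * Real.log ε) + 2 * ε * Real.log (Fintype.card Y : ℝ) :=
    hE1.trans (aux_side (fun y => |margSnd p y - margSnd ptilde y|) ε
      (fun y => abs_nonneg _) hm hsum1 hε hε0)
  -- conditional part
  have hCrw : ∀ r : Z → Y → ℝ, (∀ z y, 0 ≤ r z y) → (∀ z, margFst r z = margFst p z) →
      condEnt r = -∑ z, ∑ y, margFst p z
        * ((r z y / margFst p z) * Real.log (r z y / margFst p z)) := by
    intro r hr hrm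
    unfold condEnt
    congr 1
    refine Finset.sum_congr rfl fun z _ => Finset.sum_congr rfl fun y _ => ?_
    rw [hrm z]
    rcases eq_or_ne (margFst p z) 0 with h | h
    · have hr0 : r z y = 0 := by
        have h1 : r z y ≤ margFst r z :=
          Finset.single_le_sum (fun y' _ => hr z y') (Finset.mem_univ y)
        rw [hrm z, h] at h1
        exact le_antisymm h1 (hr z y)
      rw [hr0, h]
      simp
    · rw [eq_comm, mul_comm (margFst p z), mul_assoc, mul_comm (Real.log _),
        ← mul_assoc, div_mul_cancel₀ _ h, mul_comm]
  have hC : |condEnt p - condEnt ptilde|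
      ≤ -(ε * Real.log ε) + 2 * ε * Real.log (Fintype.card Y : ℝ) := by
    rw [hCrw p hp.1 (fun z => rfl), hCrw ptilde hptilde.1 (fun z => (hmarg z).symm)]
    rw [neg_sub_neg, abs_sub_comm]
    exact aux_cond p ptilde (margFst p) ε hp.1 hptilde.1 hpw hqw hw0 hWsum hm hl1' hε hε0
  -- combine
  have htri : |mi p - mi ptilde|
      ≤ |ent (margSnd p) - ent (margSnd ptilde)| + |condEnt p - condEnt ptilde| := by
    have h1 : mi p - mi ptilde = (ent (margSnd p) - ent (margSnd ptilde))
        - (condEnt p - condEnt ptilde) := by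
      simp only [mi]; ring
    rw [h1, sub_eq_add_neg]
    refine le_trans (abs_add_le _ _) ?_
    rw [abs_neg]
  have hRHSlog : Real.log (ε / (Fintype.card Y : ℝ)^2)
      = Real.log ε - 2 * Real.log (Fintype.card Y : ℝ) := by
    rw [Real.log_div (ne_of_gt hε0) (ne_of_gt (pow_pos hmpos 2)), Real.log_pow]
    push_cast; ring
  rw [hRHSlog]
  nlinarith [hE, hC, htri]
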